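/- Assume in addition that the tridiagonal matrix representing A with respect to the fixed feasible basis has constant row sum θ_r for some eigenvalue θ_r of A (i.e., c_i + a_i + b_i = θ_r for 0 ≤ i ≤ d, with conventions c_0 = 0 and b_d = 0). Fix an integer s with 0 ≤ s ≤ d and s ≠ r. Then the following are equivalent: (i) in the graph Δ, vertex r is adjacent to vertex s and to no other vertices; (ii) c_iθ*_{i−1} + a_iθ*_i + b_iθ*_{i+1} − θ_rθ*_i = (θ_s − θ_r)(θ*_i − a*_r) for 0 ≤ i ≤ d (using the conventions c_0 = 0 and b_d = 0, so the terms with indices −1 and d+1 vanish), and A* is not a scalar multiple of the identity I. -/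

import Mathlib

open Finset

/-- Row sum lemma for tridiagonal matrices. -/
lemma aux_row {𝕜 : Type*} [Field 𝕜] {d : ℕ} (M : Matrix (Fin (d+1)) (Fin (d+1)) 𝕜)
    (a b c : ℕ → 𝕜)
    (hM : ∀ i j : Fin (d + 1), M i j =
      if (i : ℕ) = (j : ℕ) then a i
      else if (i : ℕ) + 1 = (j : ℕ) then b i
      else if (j : ℕ) + 1 = (i : ℕ) then c i else 0)
    (hbd : b d = 0) (hc0 : c 0 = 0) (x : ℕ → 𝕜) (i : Fin (d+1)) :
    ∑ j, M i j * x (j : ℕ)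
      = c i * x ((i : ℕ) - 1) + a i * x (i : ℕ) + b i * x ((i : ℕ) + 1) := by
  have hsplit : ∀ j : Fin (d+1), M i j * x (j : ℕ) =
      (if j = i then a (i : ℕ) * x (i : ℕ) else 0)
      + (if (i : ℕ) + 1 = (j : ℕ) then b (i : ℕ) * x ((i : ℕ) + 1) else 0)
      + (if (j : ℕ) + 1 = (i : ℕ) then c (i : ℕ) * x ((i : ℕ) - 1) else 0) := by
    intro j
    rw [hM i j]
    by_cases h1 : (i : ℕ) = (j : ℕ)
    · have : j = i := Fin.ext h1.symm
      subst this
      simp [h1]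
    · have hji : ¬ (j = i) := fun h => h1 (by rw [h])
      by_cases h2 : (i : ℕ) + 1 = (j : ℕ)
      · have h3 : ¬ ((j : ℕ) + 1 = (i : ℕ)) := by omega
        have hx : x (j : ℕ) = x ((i : ℕ) + 1) := by rw [← h2]
        simp [h1, h2, h3, hji, hx]
      · by_cases h3 : (j : ℕ) + 1 = (i : ℕ)
        · have hx : x (j : ℕ) = x ((i : ℕ) - 1) := by
            congr 1; omega
          simp [h1, h2, h3, hji, hx]
        · simp [h1, h2, h3, hji]
  rw [Finset.sum_congr rfl (fun j _ => hsplit j)]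
  rw [Finset.sum_add_distrib, Finset.sum_add_distrib]
  have S1 : ∑ j : Fin (d+1), (if j = i then a (i : ℕ) * x (i : ℕ) else 0)
      = a (i : ℕ) * x (i : ℕ) := by
    simp
  have S2 : ∑ j : Fin (d+1), (if (i : ℕ) + 1 = (j : ℕ) then b (i : ℕ) * x ((i : ℕ) + 1) else 0)
      = b (i : ℕ) * x ((i : ℕ) + 1) := by
    by_cases hi : (i : ℕ) < d
    · have hcond : ∀ j : Fin (d+1), ((i : ℕ) + 1 = (j : ℕ)) ↔ j = (⟨(i : ℕ) + 1, by omega⟩ : Fin (d+1)) := by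
        intro j
        constructor
        · intro h; exact Fin.ext (by simp [← h])
        · intro h; subst h; rfl
      simp_rw [hcond]
      simp
    · have hieq : (i : ℕ) = d := by have := i.isLt; omega
      have hnone : ∀ j : Fin (d+1), ¬ ((i : ℕ) + 1 = (j : ℕ)) := by
        intro j; have := j.isLt; omega
      rw [Finset.sum_eq_zero (fun j _ => by rw [if_neg (hnone j)])]
      rw [hieq, hbd, zero_mul]
  have S3 : ∑ j : Fin (d+1), (if (j : ℕ) + 1 = (i : ℕ) then c (i : ℕ) * x ((i : ℕ) - 1) else 0)
      = c (i : ℕ) * x ((i : ℕ) - 1) := by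
    by_cases hi : 0 < (i : ℕ)
    · have hcond : ∀ j : Fin (d+1), ((j : ℕ) + 1 = (i : ℕ)) ↔ j = (⟨(i : ℕ) - 1, by omega⟩ : Fin (d+1)) := by
        intro j
        constructor
        · intro h; exact Fin.ext (by simp; omega)
        · intro h; subst h; simp; omega
      simp_rw [hcond]
      simp
    · have hieq : (i : ℕ) = 0 := by omega
      have hnone : ∀ j : Fin (d+1), ¬ ((j : ℕ) + 1 = (i : ℕ)) := by
        intro j; omega
      rw [Finset.sum_eq_zero (fun j _ => by rw [if_neg (hnone j)])]
      rw [hieq, hc0, zero_mul]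
  rw [S1, S2, S3]; ring

theorem stmt_19 {𝕜 : Type*} [Field 𝕜] {V : Type*} [AddCommGroup V] [Module 𝕜 V]
    [FiniteDimensional 𝕜 V] {d : ℕ} (hdim : Module.finrank 𝕜 V = d + 1)
    (A : Module.End 𝕜 V)
    (Estar : Fin (d + 1) → Module.End 𝕜 V)
    (hidem : ∀ i j, Estar i * Estar j = if i = j then Estar i else 0)
    (hrank : ∀ i, Module.finrank 𝕜 (LinearMap.range (Estar i)) = 1)
    (htri : ∀ i j : Fin (d + 1), 1 < |((i : ℕ) : ℤ) - ((j : ℕ) : ℤ)| → Estar i * A * Estar j = 0)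
    (hirr : ∀ i j : Fin (d + 1), |((i : ℕ) : ℤ) - ((j : ℕ) : ℤ)| = 1 → Estar i * A * Estar j ≠ 0)
    (hd : 1 ≤ d)
    (θ : Fin (d + 1) → 𝕜) (hθ : Function.Injective θ)
    (E : Fin (d + 1) → Module.End 𝕜 V)
    (hEidem : ∀ i j, E i * E j = if i = j then E i else 0)
    (hErank : ∀ i, Module.finrank 𝕜 (LinearMap.range (E i)) = 1)
    (hA : A = ∑ i, θ i • E i)
    (θstar : ℕ → 𝕜)
    (Astar : Module.End 𝕜 V) (hAstar : Astar = ∑ i : Fin (d + 1), θstar (i : ℕ) • Estar i)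
    (v : Module.Basis (Fin (d + 1)) 𝕜 V) (hfeas : ∀ i, v i ∈ LinearMap.range (Estar i))
    (a b c : ℕ → 𝕜)
    (hM : ∀ i j : Fin (d + 1), LinearMap.toMatrix v v A i j =
      if (i : ℕ) = (j : ℕ) then a i
      else if (i : ℕ) + 1 = (j : ℕ) then b i
      else if (j : ℕ) + 1 = (i : ℕ) then c i else 0)
    (ha : ∀ i : Fin (d + 1), a i = LinearMap.trace 𝕜 V (Estar i * A))
    (hb : ∀ i, i < d → b i ≠ 0) (hbd : b d = 0)
    (hc : ∀ i, 0 < i → i ≤ d → c i ≠ 0) (hc0 : c 0 = 0)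
    (r : Fin (d + 1)) (hrow : ∀ i ≤ d, c i + a i + b i = θ r)
    (s : Fin (d + 1)) (hsr : s ≠ r) :
    ((E r * Astar * E s ≠ 0) ∧
        (∀ t : Fin (d + 1), t ≠ s → t ≠ r → E r * Astar * E t = 0))
      ↔
      ((∀ i ≤ d,
          c i * θstar (i - 1) + a i * θstar i + b i * θstar (i + 1) - θ r * θstar i
            = (θ s - θ r) * (θstar i - LinearMap.trace 𝕜 V (E r * Astar)))
      ∧ ¬∃ κ : 𝕜, Astar = κ • (1 : Module.End 𝕜 V)) := by
  classical
  set M : Matrix (Fin (d+1)) (Fin (d+1)) 𝕜 := LinearMap.toMatrix v v A with hMdef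
  -- action of Estar on basis
  have hEsv : ∀ i j : Fin (d+1), Estar i (v j) = if i = j then v j else 0 := by
    intro i j
    obtain ⟨w, hw⟩ := hfeas j
    have : Estar i (v j) = (Estar i * Estar j) w := by
      rw [Module.End.mul_apply, hw]
    rw [this, hidem i j]
    by_cases h : i = j <;> simp [h, hw]
  -- action of Astar on basis
  have hAsv : ∀ j : Fin (d+1), Astar (v j) = θstar (j : ℕ) • v j := by
    intro j
    rw [hAstar]
    rw [LinearMap.sum_apply]
    simp_rw [LinearMap.smul_apply, hEsv]
    rw [Finset.sum_eq_single j]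
    · simp
    · intro i _ hij; simp [hij]
    · intro h; simp at h
  -- A on basis
  have hAv : ∀ j : Fin (d+1), A (v j) = ∑ i, M i j • v i := by
    intro j
    conv_lhs => rw [← v.sum_repr (A (v j))]
    refine Finset.sum_congr rfl (fun i _ => ?_)
    rw [hMdef, LinearMap.toMatrix_apply]
  -- E identities
  have hAE : ∀ t, A * E t = θ t • E t := by
    intro t
    rw [hA, Finset.sum_mul]
    simp_rw [smul_mul_assoc, hEidem]
    rw [Finset.sum_eq_single t]
    · simp
    · intro i _ hij; simp [hij]
    · intro h; simp at h
  have hEA : ∀ t, E t * A = θ t • E t := by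
    intro t
    rw [hA, Finset.mul_sum]
    simp_rw [mul_smul_comm, hEidem]
    rw [Finset.sum_eq_single t]
    · simp
    · intro i _ hij; simp [Ne.symm hij]
    · intro h; simp at h
  have sumE : ∑ t, E t = (1 : Module.End 𝕜 V) := by
    have hw : ∀ t : Fin (d+1), ∃ w : V, w ∈ LinearMap.range (E t) ∧ w ≠ 0 := by
      intro t
      by_contra hcon
      push_neg at hcon
      have hbot : LinearMap.range (E t) = ⊥ := by
        rw [Submodule.eq_bot_iff]
        intro x hx
        exact hcon x hx
      have := hErank t
      rw [hbot] at this
      simp at this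
    choose w hwmem hw0 using hw
    have hwe : ∀ t, A (w t) = θ t • w t := by
      intro t
      obtain ⟨y, hy⟩ := hwmem t
      have h1 : A (w t) = (A * E t) y := by rw [Module.End.mul_apply, hy]
      rw [h1, hAE t, LinearMap.smul_apply, hy]
    have hli : LinearIndependent 𝕜 w := by
      apply A.eigenvectors_linearIndependent' θ hθ w
      intro t
      exact ⟨Module.End.mem_eigenspace_iff.mpr (hwe t), hw0 t⟩
    have hcard : Fintype.card (Fin (d+1)) = Module.finrank 𝕜 V := by simp [hdim]
    let B : Module.Basis (Fin (d+1)) 𝕜 V := basisOfLinearIndependentOfCardEqFinrank hli hcard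
    have hB : ∀ i, B i = w i := by
      intro i
      rw [show B = basisOfLinearIndependentOfCardEqFinrank hli hcard from rfl,
        coe_basisOfLinearIndependentOfCardEqFinrank]
    apply B.ext
    intro i
    rw [hB i, LinearMap.sum_apply, Module.End.one_apply]
    obtain ⟨y, hy⟩ := hwmem i
    have hterm : ∀ t, E t (w i) = if t = i then w i else 0 := by
      intro t
      have h1 : E t (w i) = (E t * E i) y := by rw [Module.End.mul_apply, hy]
      rw [h1, hEidem t i]
      by_cases h : t = i <;> simp [h, hy]
    simp_rw [hterm]
    rw [Finset.sum_eq_single i]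
    · simp
    · intro t _ htj; simp [htj]
    · intro h; simp at h
  -- u
  set u : V := ∑ i, v i with hu
  have hrepru : ∀ i, v.repr u i = 1 := by
    intro i
    rw [hu, map_sum]
    simp_rw [Module.Basis.repr_self]
    rw [Finset.sum_apply']
    rw [Finset.sum_eq_single i]
    · simp
    · intro j _ hij; simp [Finsupp.single_apply, hij]
    · intro h; simp at h
  have hu0 : u ≠ 0 := by
    intro h
    have := hrepru 0
    rw [h] at this
    simp at this
  -- row sums
  have rowlem : ∀ (x : ℕ → 𝕜) (i : Fin (d+1)), ∑ j, M i j * x (j : ℕ)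
      = c i * x ((i : ℕ) - 1) + a i * x (i : ℕ) + b i * x ((i : ℕ) + 1) := by
    intro x i
    exact aux_row M a b c hM hbd hc0 x i
  have hrowsum : ∀ i : Fin (d+1), ∑ j, M i j = θ r := by
    intro i
    have h2 := rowlem (fun _ => 1) i
    simp only [mul_one] at h2
    rw [h2, hrow (i : ℕ) (by omega)]
  have hAu : A u = θ r • u := by
    rw [hu, map_sum]
    simp_rw [hAv]
    rw [Finset.sum_comm]
    rw [Finset.smul_sum]
    refine Finset.sum_congr rfl (fun i _ => ?_)
    rw [← Finset.sum_smul, hrowsum i]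
  have hEtu : ∀ t, t ≠ r → E t u = 0 := by
    intro t ht
    have h1 : E t (A u) = θ t • E t u := by
      have h0 := congrArg (fun T : Module.End 𝕜 V => T u) (hEA t)
      simpa using h0
    rw [hAu, map_smul] at h1
    have h2 : (θ r - θ t) • E t u = 0 := by
      rw [sub_smul, h1, sub_self]
    have h3 : θ r - θ t ≠ 0 := sub_ne_zero.mpr (fun h => ht (hθ h).symm)
    exact (smul_eq_zero.mp h2).resolve_left h3
  have hEru : E r u = u := by
    have h1 : (∑ t, E t) u = u := by rw [sumE]; rfl
    rw [LinearMap.sum_apply] at h1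
    rw [Finset.sum_eq_single r] at h1
    · exact h1
    · intro t _ htr; exact hEtu t htr
    · intro h; simp at h
  have hrangeEr : LinearMap.range (E r) = Submodule.span 𝕜 {u} := by
    have hle : Submodule.span 𝕜 {u} ≤ LinearMap.range (E r) := by
      rw [Submodule.span_singleton_le_iff_mem]
      exact ⟨u, hEru⟩
    have h1 : Module.finrank 𝕜 (Submodule.span 𝕜 ({u} : Set V)) = 1 :=
      finrank_span_singleton hu0
    exact (Submodule.eq_of_le_of_finrank_le hle (by rw [h1, hErank r])).symm
  have heig : ∀ z : V, A z = θ r • z → ∃ μ : 𝕜, z = μ • u := by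
    intro z hz
    have hEtz : ∀ t, t ≠ r → E t z = 0 := by
      intro t ht
      have h1 : E t (A z) = θ t • E t z := by
        have h0 := congrArg (fun T : Module.End 𝕜 V => T z) (hEA t)
        simpa using h0
      rw [hz, map_smul] at h1
      have h2 : (θ r - θ t) • E t z = 0 := by
        rw [sub_smul, h1, sub_self]
      have h3 : θ r - θ t ≠ 0 := sub_ne_zero.mpr (fun h => ht (hθ h).symm)
      exact (smul_eq_zero.mp h2).resolve_left h3
    have hz2 : z = E r z := by
      have h1 : (∑ t, E t) z = z := by rw [sumE]; rfl
      rw [LinearMap.sum_apply] at h1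
      rw [Finset.sum_eq_single r] at h1
      · exact h1.symm
      · intro t _ htr; exact hEtz t htr
      · intro h; simp at h
    have hmem : z ∈ Submodule.span 𝕜 ({u} : Set V) := by
      rw [← hrangeEr]
      exact ⟨z, hz2.symm⟩
    obtain ⟨μ, hμ⟩ := Submodule.mem_span_singleton.mp hmem
    exact ⟨μ, hμ.symm⟩
  -- the functional f
  set f : V →ₗ[𝕜] 𝕜 := (v.coord 0) ∘ₗ (E r : V →ₗ[𝕜] V) with hf
  have hcoord0u : v.coord 0 u = 1 := by
    rw [Module.Basis.coord_apply, hrepru]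
  have hEr_eq : ∀ x, E r x = f x • u := by
    intro x
    have hmem : E r x ∈ Submodule.span 𝕜 ({u} : Set V) := by
      rw [← hrangeEr]; exact ⟨x, rfl⟩
    obtain ⟨μ, hμ⟩ := Submodule.mem_span_singleton.mp hmem
    have hfx : f x = μ := by
      rw [hf, LinearMap.comp_apply, ← hμ, map_smul, hcoord0u, smul_eq_mul, mul_one]
    rw [hfx, hμ]
  have hfu : f u = 1 := by
    rw [hf, LinearMap.comp_apply, hEru, hcoord0u]
  have hfA : ∀ x, f (A x) = θ r * f x := by
    intro x
    have h1 : E r (A x) = θ r • E r x := by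
      have h0 := congrArg (fun T : Module.End 𝕜 V => T x) (hEA r)
      simpa using h0
    rw [hf, LinearMap.comp_apply, h1, map_smul, smul_eq_mul]
    rfl
  -- k
  set k : ℕ → 𝕜 := fun m => ∏ l ∈ Finset.range m, (b l / c (l+1)) with hk
  have hk0 : ∀ m, m ≤ d → k m ≠ 0 := by
    intro m hm
    rw [hk]
    rw [Finset.prod_ne_zero_iff]
    intro l hl
    rw [Finset.mem_range] at hl
    exact div_ne_zero (hb l (by omega)) (hc (l+1) (by omega) (by omega))
  have hkrec : ∀ m, m < d → k (m+1) * c (m+1) = k m * b m := by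
    intro m hm
    have h1 : k (m+1) = k m * (b m / c (m+1)) := by
      rw [hk]; exact Finset.prod_range_succ _ m
    have hcm : c (m+1) ≠ 0 := hc (m+1) (by omega) (by omega)
    rw [h1]
    field_simp
  have keyMk : ∀ i j : Fin (d+1), M j i * k (j : ℕ) = k (i : ℕ) * M i j := by
    intro i j
    by_cases h1 : (i : ℕ) = (j : ℕ)
    · have hij : i = j := Fin.ext h1
      subst hij; ring
    · by_cases h2 : (i : ℕ) + 1 = (j : ℕ)
      · have hMji : M j i = c (j : ℕ) := by
          rw [hM j i, if_neg (by omega), if_neg (by omega), if_pos h2]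
        have hMij : M i j = b (i : ℕ) := by
          rw [hM i j, if_neg h1, if_pos h2]
        rw [hMji, hMij]
        have hj : (j : ℕ) = (i : ℕ) + 1 := h2.symm
        rw [hj, mul_comm]
        exact hkrec (i : ℕ) (by have := j.isLt; omega)
      · by_cases h3 : (j : ℕ) + 1 = (i : ℕ)
        · have hMji : M j i = b (j : ℕ) := by
            rw [hM j i, if_neg (by omega), if_pos h3]
          have hMij : M i j = c (i : ℕ) := by
            rw [hM i j, if_neg h1, if_neg h2, if_pos h3]
          rw [hMji, hMij]
          have hi : (i : ℕ) = (j : ℕ) + 1 := h3.symm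
          have hrec := hkrec (j : ℕ) (by have := i.isLt; omega)
          rw [hi, hrec]; ring
        · have hMji : M j i = 0 := by
            rw [hM j i, if_neg (by omega), if_neg (by omega), if_neg (by omega)]
          have hMij : M i j = 0 := by
            rw [hM i j, if_neg h1, if_neg h2, if_neg h3]
          rw [hMji, hMij]; ring
  -- f on basis
  have hF : ∃ lam : 𝕜, lam ≠ 0 ∧ ∀ i : Fin (d+1), f (v i) = lam * k (i : ℕ) := by
    set y : V := ∑ i : Fin (d+1), ((k (i : ℕ))⁻¹ * f (v i)) • v i with hy
    have hyrep : ∀ jj : Fin (d+1), v.repr y jj = (k (jj : ℕ))⁻¹ * f (v jj) := by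
      intro jj
      rw [hy, map_sum, Finset.sum_apply']
      simp_rw [map_smul, Finsupp.smul_apply, Module.Basis.repr_self, smul_eq_mul]
      rw [Finset.sum_eq_single jj]
      · simp
      · intro i _ hij; simp [Finsupp.single_apply, hij]
      · intro h; simp at h
    have hAyrep : ∀ jj : Fin (d+1), v.repr (A y) jj = θ r * ((k (jj : ℕ))⁻¹ * f (v jj)) := by
      intro jj
      have h1 : A y = ∑ i : Fin (d+1), ((k (i : ℕ))⁻¹ * f (v i)) • A (v i) := by
        rw [hy, map_sum]; simp_rw [map_smul]
      rw [h1, map_sum, Finset.sum_apply']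
      simp_rw [map_smul, Finsupp.smul_apply, smul_eq_mul]
      have h2 : ∀ i : Fin (d+1), v.repr (A (v i)) jj = M jj i := by
        intro i; rw [hMdef, LinearMap.toMatrix_apply]
      have h3 : ∀ i : Fin (d+1), (k (i : ℕ))⁻¹ * f (v i) * v.repr (A (v i)) jj
          = (k (jj : ℕ))⁻¹ * (M i jj * f (v i)) := by
        intro i
        rw [h2 i]
        have hki : k (i : ℕ) ≠ 0 := hk0 _ (by omega)
        have hkj : k (jj : ℕ) ≠ 0 := hk0 _ (by omega)
        have h4 := keyMk i jj
        field_simp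
        linear_combination f (v i) * h4
      rw [Finset.sum_congr rfl (fun i _ => h3 i), ← Finset.mul_sum]
      have h5 : ∑ i : Fin (d+1), M i jj * f (v i) = f (A (v jj)) := by
        rw [hAv jj, map_sum]
        simp_rw [map_smul, smul_eq_mul]
      rw [h5, hfA]
      ring
    have hAy : A y = θ r • y := by
      apply v.repr.injective
      ext jj
      rw [map_smul, Finsupp.smul_apply, hAyrep jj, hyrep jj, smul_eq_mul]
    obtain ⟨μ, hμ⟩ := heig y hAy
    have hcoef : ∀ i : Fin (d+1), (k (i : ℕ))⁻¹ * f (v i) = μ := by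
      intro i
      have h6 := congrArg (fun z => v.repr z i) hμ
      rw [hyrep i, map_smul, Finsupp.smul_apply, hrepru i, smul_eq_mul, mul_one] at h6
      exact h6
    have hfv : ∀ i : Fin (d+1), f (v i) = μ * k (i : ℕ) := by
      intro i
      have hki : k (i : ℕ) ≠ 0 := hk0 _ (by omega)
      have h7 := hcoef i
      rw [inv_mul_eq_iff_eq_mul₀ hki] at h7
      rw [h7]; ring
    refine ⟨μ, ?_, hfv⟩
    intro h0
    have h8 : f u = 0 := by
      rw [hu, map_sum]
      rw [Finset.sum_eq_zero]
      intro i _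
      rw [hfv i, h0, zero_mul]
    rw [hfu] at h8
    exact one_ne_zero h8
  obtain ⟨lam, hlam, hFv⟩ := hF
  -- trace
  set astar : 𝕜 := LinearMap.trace 𝕜 V (E r * Astar) with hastardef
  have hastar : astar = f (Astar u) := by
    have hAsu : Astar u = ∑ i : Fin (d+1), θstar (i : ℕ) • v i := by
      rw [hu, map_sum]; simp_rw [hAsv]
    have hfAsu : f (Astar u) = ∑ i : Fin (d+1), θstar (i : ℕ) * f (v i) := by
      rw [hAsu, map_sum]; simp_rw [map_smul, smul_eq_mul]
    have hdiag : ∀ i : Fin (d+1), LinearMap.toMatrix v v (E r * Astar) i i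
        = θstar (i : ℕ) * f (v i) := by
      intro i
      rw [LinearMap.toMatrix_apply, Module.End.mul_apply, hAsv, map_smul, hEr_eq, map_smul,
        map_smul, Finsupp.smul_apply, Finsupp.smul_apply, hrepru i]
      simp
    rw [hastardef, LinearMap.trace_eq_matrix_trace 𝕜 v, Matrix.trace, hfAsu]
    exact Finset.sum_congr rfl (fun i _ => by rw [Matrix.diag_apply, hdiag i])
  -- g
  set g : V →ₗ[𝕜] 𝕜 := (f ∘ₗ (Astar : V →ₗ[𝕜] V)) - astar • f with hg
  have hgapp : ∀ x, g x = f (Astar x) - astar * f x := by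
    intro x
    rw [hg, LinearMap.sub_apply, LinearMap.comp_apply, LinearMap.smul_apply, smul_eq_mul]
  have hgu : g u = 0 := by
    rw [hgapp, hfu, mul_one, ← hastar, sub_self]
  have hgEr : ∀ x, g (E r x) = 0 := by
    intro x
    rw [hEr_eq, map_smul, hgu, smul_zero]
  have hfEt : ∀ t, t ≠ r → ∀ x : V, f (E t x) = 0 := by
    intro t ht x
    have h1 : E r (E t x) = (E r * E t) x := rfl
    rw [hf, LinearMap.comp_apply, h1, hEidem r t, if_neg (Ne.symm ht)]
    simp
  have hgEt : ∀ t, t ≠ r → ∀ x : V, g (E t x) = f (Astar (E t x)) := by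
    intro t ht x
    rw [hgapp, hfEt t ht, mul_zero, sub_zero]
  have hzero_iff : ∀ t, t ≠ r → ((E r * Astar * E t = 0) ↔ ∀ x, g (E t x) = 0) := by
    intro t ht
    constructor
    · intro h x
      rw [hgEt t ht]
      have h1 : Astar (E t x) = (Astar * E t) x := rfl
      rw [hf, LinearMap.comp_apply, h1]
      have h2 : E r ((Astar * E t) x) = (E r * Astar * E t) x := by
        rw [mul_assoc]; rfl
      rw [h2, h, LinearMap.zero_apply, map_zero]
    · intro h
      ext x
      have h1 : (E r * Astar * E t) x = E r (Astar (E t x)) := by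
        rw [mul_assoc]; rfl
      rw [h1, hEr_eq, LinearMap.zero_apply]
      have h2 : f (Astar (E t x)) = 0 := by
        have h3 := h x
        rw [hgEt t ht] at h3
        exact h3
      rw [h2, zero_smul]
  -- X
  set X : ℕ → 𝕜 := fun m => θstar m - astar with hX
  have hgv : ∀ i : Fin (d+1), g (v i) = X (i : ℕ) * (lam * k (i : ℕ)) := by
    intro i
    rw [hgapp, hAsv, map_smul, smul_eq_mul, hFv i, hX]
    ring
  -- main equivalences
  have hQ : ((E r * Astar * E s ≠ 0) ∧
        (∀ t : Fin (d + 1), t ≠ s → t ≠ r → E r * Astar * E t = 0))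
      ↔ ((∀ x, g (A x) = θ s * g x) ∧ (∃ i, g (v i) ≠ 0)) := by
    have hdecomp : ∀ x : V, g x = ∑ t, g (E t x) := by
      intro x
      have h1 : x = (∑ t, E t) x := by rw [sumE]; rfl
      conv_lhs => rw [h1]
      rw [LinearMap.sum_apply, map_sum]
    have hgA : ∀ x : V, g (A x) = ∑ t, θ t * g (E t x) := by
      intro x
      have h1 : A x = ∑ t, θ t • E t x := by
        rw [hA, LinearMap.sum_apply]; simp_rw [LinearMap.smul_apply]
      rw [h1, map_sum]; simp_rw [map_smul, smul_eq_mul]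
    constructor
    · rintro ⟨h1, h2⟩
      have hz : ∀ t, t ≠ s → ∀ x : V, g (E t x) = 0 := by
        intro t hts x
        by_cases htr : t = r
        · subst htr; exact hgEr x
        · exact (hzero_iff t htr).mp (h2 t hts htr) x
      have hgs : ∀ x : V, g x = g (E s x) := by
        intro x
        rw [hdecomp x, Finset.sum_eq_single s]
        · intro t _ hts; exact hz t hts x
        · intro h; simp at h
      constructor
      · intro x
        rw [hgA x, Finset.sum_eq_single s]
        · rw [← hgs x]
        · intro t _ hts; rw [hz t hts x, mul_zero]
        · intro h; simp at h
      · by_contra hcon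
        push_neg at hcon
        have hg0 : g = 0 := by
          apply v.ext
          intro i
          rw [hcon i, LinearMap.zero_apply]
        apply h1
        rw [hzero_iff s hsr]
        intro x
        rw [hg0, LinearMap.zero_apply]
    · rintro ⟨h1, h2⟩
      have hz : ∀ t, t ≠ s → ∀ x : V, g (E t x) = 0 := by
        intro t hts x
        have e1 : g (A (E t x)) = θ s * g (E t x) := h1 _
        have e2 : A (E t x) = θ t • E t x := by
          have h0 := congrArg (fun T : Module.End 𝕜 V => T x) (hAE t)
          simpa using h0
        rw [e2, map_smul, smul_eq_mul] at e1
        have e3 : (θ t - θ s) * g (E t x) = 0 := by rw [sub_mul, e1]; ring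
        have e4 : θ t - θ s ≠ 0 := sub_ne_zero.mpr (fun h => hts (hθ h))
        exact (mul_eq_zero.mp e3).resolve_left e4
      constructor
      · intro h0
        obtain ⟨i, hi⟩ := h2
        apply hi
        rw [hdecomp (v i), Finset.sum_eq_zero]
        intro t _
        by_cases hts : t = s
        · subst hts; exact (hzero_iff t hsr).mp h0 (v i)
        · exact hz t hts (v i)
      · intro t hts htr
        rw [hzero_iff t htr]
        exact hz t hts
  have hbridge : ((∀ x, g (A x) = θ s * g x) ∧ (∃ i, g (v i) ≠ 0))
      ↔ ((∀ i : Fin (d+1), ∑ j, M i j * X (j : ℕ) = θ s * X (i : ℕ))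
          ∧ (∃ i : Fin (d+1), X (i : ℕ) ≠ 0)) := by
    have hlk : ∀ i : Fin (d+1), lam * k (i : ℕ) ≠ 0 :=
      fun i => mul_ne_zero hlam (hk0 _ (by omega))
    have hcoordEq : ∀ i : Fin (d+1),
        (g (A (v i)) = θ s * g (v i)) ↔ (∑ j, M i j * X (j : ℕ) = θ s * X (i : ℕ)) := by
      intro i
      have e2 : g (A (v i)) = ∑ j, M j i * g (v j) := by
        rw [hAv i, map_sum]; simp_rw [map_smul, smul_eq_mul]
      have e3 : ∀ j : Fin (d+1), M j i * g (v j) = (lam * k (i : ℕ)) * (M i j * X (j : ℕ)) := by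
        intro j
        rw [hgv j]
        have h4 := keyMk i j
        linear_combination (lam * X (j : ℕ)) * h4
      have e5 : g (A (v i)) = (lam * k (i : ℕ)) * ∑ j, M i j * X (j : ℕ) := by
        rw [e2, Finset.sum_congr rfl (fun j _ => e3 j), ← Finset.mul_sum]
      constructor
      · intro e1
        rw [e5, hgv i] at e1
        have e6 : (lam * k (i : ℕ)) * (∑ j, M i j * X (j : ℕ))
            = (lam * k (i : ℕ)) * (θ s * X (i : ℕ)) := by
          rw [e1]; ring
        exact mul_left_cancel₀ (hlk i) e6
      · intro e1
        rw [e5, e1, hgv i]; ring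
    constructor
    · rintro ⟨h1, h2⟩
      refine ⟨fun i => (hcoordEq i).mp (h1 _), ?_⟩
      obtain ⟨i, hi⟩ := h2
      refine ⟨i, fun h0 => hi ?_⟩
      rw [hgv i, h0, zero_mul]
    · rintro ⟨h1, h2⟩
      constructor
      · intro x
        have hmap : (g ∘ₗ (A : V →ₗ[𝕜] V)) = θ s • g := by
          apply v.ext
          intro i
          rw [LinearMap.comp_apply, LinearMap.smul_apply, smul_eq_mul]
          exact (hcoordEq i).mpr (h1 i)
        have := congrArg (fun T : V →ₗ[𝕜] 𝕜 => T x) hmap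
        simpa using this
      · obtain ⟨i, hi⟩ := h2
        exact ⟨i, by rw [hgv i]; exact mul_ne_zero hi (hlk i)⟩
  have hRHS1 : (∀ i ≤ d,
          c i * θstar (i - 1) + a i * θstar i + b i * θstar (i + 1) - θ r * θstar i
            = (θ s - θ r) * (θstar i - astar))
      ↔ (∀ i : Fin (d+1), ∑ j, M i j * X (j : ℕ) = θ s * X (i : ℕ)) := by
    constructor
    · intro h1 i
      have hi := h1 (i : ℕ) (by omega)
      have hrs := hrow (i : ℕ) (by omega)
      rw [rowlem X i]
      simp only [hX]
      linear_combination hi - astar * hrs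
    · intro h1 i hid
      have e0 := h1 ⟨i, by omega⟩
      rw [rowlem X ⟨i, by omega⟩] at e0
      simp only [show ((⟨i, by omega⟩ : Fin (d+1)) : ℕ) = i from rfl, hX] at e0
      have hrs := hrow i hid
      linear_combination e0 + astar * hrs
  have hRHS2 : (¬∃ κ : 𝕜, Astar = κ • (1 : Module.End 𝕜 V)) ↔ (∃ i : Fin (d+1), X (i : ℕ) ≠ 0) := by
    constructor
    · intro hne
      by_contra hcon
      push_neg at hcon
      apply hne
      refine ⟨astar, ?_⟩
      apply v.ext
      intro i
      rw [hAsv i]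
      have h1 : θstar (i : ℕ) = astar := by
        have h2 := hcon i
        simp only [hX] at h2
        exact sub_eq_zero.mp h2
      rw [h1]
      simp
    · rintro ⟨i, hi⟩ ⟨κ, hκ⟩
      have hastarκ : astar = κ := by
        have h1 : Astar u = κ • u := by rw [hκ]; simp
        rw [hastar, h1, map_smul, hfu, smul_eq_mul, mul_one]
      have hθi : θstar (i : ℕ) = κ := by
        have e1 : Astar (v i) = κ • v i := by rw [hκ]; simp
        rw [hAsv i] at e1
        have e2 : (θstar (i : ℕ) - κ) • v i = 0 := by
          rw [sub_smul, e1, sub_self]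
        rcases smul_eq_zero.mp e2 with h | h
        · exact sub_eq_zero.mp h
        · exact absurd h (v.ne_zero i)
      apply hi
      simp only [hX, hθi, hastarκ, sub_self]
  exact hQ.trans (hbridge.trans (and_congr hRHS1.symm hRHS2.symm))
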